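/- For a general linear quantum system: (i) there exist a nonnegative integer n₁ and a matrix Z₁ ∈ ℂ^{n×n₁} with Z₁ᴴ Z₁ = I_{n₁} such that the column space of the matrix [Z₁ 0; 0 conj(Z₁)] ∈ ℂ^{2n×2n₁} equals R_co := Im(C_G) ∩ Im(O_Gᴴ); (ii) there exist a nonnegative integer n₂ and a matrix Z₂ ∈ ℂ^{n×n₂} with Z₂ᴴ Z₂ = I_{n₂} such that the column space of [Z₂ 0; 0 conj(Z₂)] ∈ ℂ^{2n×2n₂} equals R_c̄ō := Ker(C_Gᴴ) ∩ Ker(O_G). -/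

import Mathlib

open Matrix

noncomputable section

/-- `J_k = [I 0; 0 -I]` acting on `ℂ^{2k} = ℂ^k ⊕ ℂ^k`. -/
def Jmat (k : ℕ) : Matrix (Fin k ⊕ Fin k) (Fin k ⊕ Fin k) ℂ :=
  Matrix.fromBlocks 1 0 0 (-1)

/-- Entrywise complex conjugation of a matrix. -/
def mconj {α β : Type} (M : Matrix α β ℂ) : Matrix α β ℂ :=
  M.map (starRingEnd ℂ)

/-- The doubled-up matrix `Δ(U,V) = [U V; conj V  conj U]`. -/
def doubledUp {k r : ℕ} (U V : Matrix (Fin k) (Fin r) ℂ) :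
    Matrix (Fin k ⊕ Fin k) (Fin r ⊕ Fin r) ℂ :=
  Matrix.fromBlocks U V (mconj V) (mconj U)

/-- The ♭-adjoint `X♭ = J_r Xᴴ J_k` of `X ∈ ℂ^{2k×2r}`. -/
def flat {k r : ℕ} (X : Matrix (Fin k ⊕ Fin k) (Fin r ⊕ Fin r) ℂ) :
    Matrix (Fin r ⊕ Fin r) (Fin k ⊕ Fin k) ℂ :=
  Jmat r * Xᴴ * Jmat k

/-- Orthogonal complement of a subspace of `ℂ^ι` w.r.t. the standard Hermitian
inner product `⟪y, x⟫ = (star y) ⬝ᵥ x`. -/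
def orthComp {ι : Type} [Fintype ι] (S : Submodule ℂ (ι → ℂ)) : Submodule ℂ (ι → ℂ) where
  carrier := {x | ∀ y ∈ S, star y ⬝ᵥ x = 0}
  add_mem' := by
    intro a b ha hb y hy
    simp only [Set.mem_setOf_eq] at *
    rw [dotProduct_add, ha y hy, hb y hy, add_zero]
  zero_mem' := by
    intro y hy
    simp
  smul_mem' := by
    intro c x hx y hy
    simp only [Set.mem_setOf_eq] at *
    rw [dotProduct_smul, hx y hy, smul_zero]

/-- The controllable subspace `Im(C_G) = ∑_{k<2n} Im(𝒜ᵏℬ)`. -/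
def ctrbSub (n m : ℕ) (𝒜 : Matrix (Fin n ⊕ Fin n) (Fin n ⊕ Fin n) ℂ)
    (ℬ : Matrix (Fin n ⊕ Fin n) (Fin m ⊕ Fin m) ℂ) : Submodule ℂ (Fin n ⊕ Fin n → ℂ) :=
  ⨆ k ∈ Finset.range (2 * n), LinearMap.range ((𝒜 ^ k * ℬ).mulVecLin)

/-- The unobservable subspace `Ker(O_G) = ⋂_{k<2n} Ker(𝒞𝒜ᵏ)`. -/
def unobsSub (n m : ℕ) (𝒜 : Matrix (Fin n ⊕ Fin n) (Fin n ⊕ Fin n) ℂ)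
    (𝒞 : Matrix (Fin m ⊕ Fin m) (Fin n ⊕ Fin n) ℂ) : Submodule ℂ (Fin n ⊕ Fin n → ℂ) :=
  ⨅ k ∈ Finset.range (2 * n), LinearMap.ker ((𝒞 * 𝒜 ^ k).mulVecLin)

namespace QLS

/-- sign function on `Fin k ⊕ Fin k`. -/
def sgn (k : ℕ) : Fin k ⊕ Fin k → ℂ := Sum.elim (fun _ => 1) (fun _ => -1)

lemma sgn_conj {k : ℕ} (p : Fin k ⊕ Fin k) : (starRingEnd ℂ) (sgn k p) = sgn k p := by
  cases p <;> simp [sgn]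

lemma sgn_swap {k : ℕ} (p : Fin k ⊕ Fin k) : sgn k p.swap = -sgn k p := by
  cases p <;> simp [sgn]

lemma Jmat_eq_diagonal (k : ℕ) : Jmat k = Matrix.diagonal (sgn k) := by
  ext p q
  cases p <;> cases q <;>
    simp [Jmat, sgn, Matrix.diagonal_apply, Matrix.one_apply] <;> split <;> simp_all

lemma JmulJ (k : ℕ) : Jmat k * Jmat k = 1 := by
  rw [Jmat_eq_diagonal, Matrix.diagonal_mul_diagonal]
  have : (fun i => sgn k i * sgn k i) = fun _ => (1 : ℂ) := by
    funext p; cases p <;> simp [sgn]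
  rw [this, Matrix.diagonal_one]

lemma Jcancel {k : ℕ} {ι : Type} [Fintype ι] (X : Matrix (Fin k ⊕ Fin k) ι ℂ) :
    Jmat k * (Jmat k * X) = X := by
  rw [← Matrix.mul_assoc, JmulJ, Matrix.one_mul]

lemma Jcancel_right {k : ℕ} {ι : Type} [Fintype ι] (X : Matrix ι (Fin k ⊕ Fin k) ℂ) :
    X * Jmat k * Jmat k = X := by
  rw [Matrix.mul_assoc, JmulJ, Matrix.mul_one]

lemma JH (k : ℕ) : (Jmat k)ᴴ = Jmat k := by
  rw [Jmat_eq_diagonal, Matrix.diagonal_conjTranspose]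
  have : star (sgn k) = sgn k := by
    funext p; cases p <;> simp [sgn]
  rw [this]

lemma Jmat_mulVec {k : ℕ} (x : Fin k ⊕ Fin k → ℂ) :
    Jmat k *ᵥ x = fun p => sgn k p * x p := by
  rw [Jmat_eq_diagonal]
  funext p
  rw [Matrix.mulVec_diagonal]

lemma Jmat_mulVec_mulVec {k : ℕ} (x : Fin k ⊕ Fin k → ℂ) :
    Jmat k *ᵥ (Jmat k *ᵥ x) = x := by
  rw [Matrix.mulVec_mulVec, JmulJ, Matrix.one_mulVec]

/-! ### Doubled-up matrices and the swap-conjugation `Tv` -/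

def Tv {k : ℕ} (x : Fin k ⊕ Fin k → ℂ) : Fin k ⊕ Fin k → ℂ :=
  fun p => (starRingEnd ℂ) (x p.swap)

def DU {k r : ℕ} (M : Matrix (Fin k ⊕ Fin k) (Fin r ⊕ Fin r) ℂ) : Prop :=
  ∀ p q, M p.swap q.swap = (starRingEnd ℂ) (M p q)

lemma Tv_Tv {k : ℕ} (x : Fin k ⊕ Fin k → ℂ) : Tv (Tv x) = x := by
  funext p; simp [Tv, Sum.swap_swap]

lemma Tv_add {k : ℕ} (x y : Fin k ⊕ Fin k → ℂ) : Tv (x + y) = Tv x + Tv y := by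
  funext p; simp [Tv]

lemma Tv_zero {k : ℕ} : Tv (0 : Fin k ⊕ Fin k → ℂ) = 0 := by
  funext p; simp [Tv]

lemma Tv_smul {k : ℕ} (c : ℂ) (x : Fin k ⊕ Fin k → ℂ) :
    Tv (c • x) = (starRingEnd ℂ) c • Tv x := by
  funext p; simp [Tv]

lemma Tv_neg {k : ℕ} (x : Fin k ⊕ Fin k → ℂ) : Tv (-x) = -Tv x := by
  funext p; simp [Tv]

lemma DU.mul {k r s : ℕ} {M : Matrix (Fin k ⊕ Fin k) (Fin r ⊕ Fin r) ℂ}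
    {N : Matrix (Fin r ⊕ Fin r) (Fin s ⊕ Fin s) ℂ} (hM : DU M) (hN : DU N) :
    DU (M * N) := by
  intro p q
  rw [Matrix.mul_apply, Matrix.mul_apply, map_sum]
  rw [← Equiv.sum_comp (Equiv.sumComm (Fin r) (Fin r))]
  refine Finset.sum_congr rfl fun t _ => ?_
  have ht : (Equiv.sumComm (Fin r) (Fin r)) t = t.swap := rfl
  rw [ht, hM p t, hN t q, _root_.map_mul]

lemma DU.add {k r : ℕ} {M N : Matrix (Fin k ⊕ Fin k) (Fin r ⊕ Fin r) ℂ}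
    (hM : DU M) (hN : DU N) : DU (M + N) := by
  intro p q
  simp [Matrix.add_apply, hM p q, hN p q]

lemma DU.neg {k r : ℕ} {M : Matrix (Fin k ⊕ Fin k) (Fin r ⊕ Fin r) ℂ}
    (hM : DU M) : DU (-M) := by
  intro p q
  simp [Matrix.neg_apply, hM p q]

lemma DU.sub {k r : ℕ} {M N : Matrix (Fin k ⊕ Fin k) (Fin r ⊕ Fin r) ℂ}
    (hM : DU M) (hN : DU N) : DU (M - N) := by
  rw [sub_eq_add_neg]; exact hM.add hN.neg

lemma DU.smul {k r : ℕ} {M : Matrix (Fin k ⊕ Fin k) (Fin r ⊕ Fin r) ℂ}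
    {c : ℂ} (hc : (starRingEnd ℂ) c = c) (hM : DU M) : DU (c • M) := by
  intro p q
  simp [Matrix.smul_apply, hM p q, hc]

lemma DU.one {k : ℕ} : DU (1 : Matrix (Fin k ⊕ Fin k) (Fin k ⊕ Fin k) ℂ) := by
  intro p q
  have hpq : p.swap = q.swap ↔ p = q := by
    constructor
    · intro h; have := congrArg Sum.swap h; simpa [Sum.swap_swap] using this
    · intro h; rw [h]
  simp only [Matrix.one_apply, hpq]
  split <;> simp

lemma DU.pow {k : ℕ} {M : Matrix (Fin k ⊕ Fin k) (Fin k ⊕ Fin k) ℂ}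
    (hM : DU M) : ∀ j : ℕ, DU (M ^ j)
  | 0 => by rw [pow_zero]; exact DU.one
  | (j + 1) => by rw [pow_succ]; exact (hM.pow j).mul hM

lemma DU.doubledUp {k r : ℕ} (U V : Matrix (Fin k) (Fin r) ℂ) :
    DU (doubledUp U V) := by
  intro p q
  cases p <;> cases q <;> simp [_root_.doubledUp, mconj, Sum.swap]

lemma flat_apply {k r : ℕ} (M : Matrix (Fin k ⊕ Fin k) (Fin r ⊕ Fin r) ℂ)
    (a : Fin r ⊕ Fin r) (b : Fin k ⊕ Fin k) :
    flat M a b = sgn r a * (starRingEnd ℂ) (M b a) * sgn k b := by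
  show (Jmat r * Mᴴ * Jmat k) a b = _
  rw [Jmat_eq_diagonal, Jmat_eq_diagonal, Matrix.mul_diagonal, Matrix.diagonal_mul,
    Matrix.conjTranspose_apply]
  rfl

lemma DU.flat {k r : ℕ} {M : Matrix (Fin k ⊕ Fin k) (Fin r ⊕ Fin r) ℂ}
    (hM : DU M) : DU (flat M) := by
  intro p q
  rw [flat_apply, flat_apply, sgn_swap, sgn_swap, hM q p]
  simp only [_root_.map_mul, sgn_conj, Complex.conj_conj]
  ring

lemma DU.jsmul {k r : ℕ} {M : Matrix (Fin k ⊕ Fin k) (Fin r ⊕ Fin r) ℂ}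
    (hM : DU M) : DU ((-Complex.I) • (Jmat k * M)) := by
  intro p q
  rw [Jmat_eq_diagonal]
  simp only [Matrix.smul_apply, Matrix.diagonal_mul, smul_eq_mul, _root_.map_mul, map_neg,
    Complex.conj_I, sgn_conj]
  rw [sgn_swap, hM p q]
  ring

lemma DU.mulVec_Tv {k r : ℕ} {M : Matrix (Fin k ⊕ Fin k) (Fin r ⊕ Fin r) ℂ}
    (hM : DU M) (x : Fin r ⊕ Fin r → ℂ) : M *ᵥ (Tv x) = Tv (M *ᵥ x) := by
  funext p
  show (M *ᵥ Tv x) p = (starRingEnd ℂ) ((M *ᵥ x) p.swap)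
  rw [Matrix.mulVec, Matrix.mulVec, dotProduct, dotProduct, map_sum]
  rw [← Equiv.sum_comp (Equiv.sumComm (Fin r) (Fin r))
    (g := fun q => (starRingEnd ℂ) (M p.swap q * x q))]
  refine Finset.sum_congr rfl fun t _ => ?_
  have ht : (Equiv.sumComm (Fin r) (Fin r)) t = t.swap := rfl
  rw [ht]
  simp only [_root_.map_mul, hM p t, Complex.conj_conj, Tv]


end QLS

namespace QLS

section OC

variable {ι : Type} [Fintype ι] [DecidableEq ι]

lemma mem_orthComp {S : Submodule ℂ (ι → ℂ)} {x : ι → ℂ} :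
    x ∈ orthComp S ↔ ∀ y ∈ S, star y ⬝ᵥ x = 0 := Iff.rfl

/-- the "dual kernel" of a fixed vector. -/
def dker (x : ι → ℂ) : Submodule ℂ (ι → ℂ) where
  carrier := {y | star y ⬝ᵥ x = 0}
  add_mem' := by
    intro a b ha hb
    simp only [Set.mem_setOf_eq] at *
    rw [star_add, add_dotProduct, ha, hb, add_zero]
  zero_mem' := by simp
  smul_mem' := by
    intro c y hy
    simp only [Set.mem_setOf_eq] at *
    rw [star_smul, smul_dotProduct, hy, smul_zero]

lemma mem_dker {x y : ι → ℂ} : y ∈ dker x ↔ star y ⬝ᵥ x = 0 := Iff.rfl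

lemma orthComp_anti {S T : Submodule ℂ (ι → ℂ)} (h : S ≤ T) : orthComp T ≤ orthComp S :=
  fun x hx y hy => hx y (h hy)

lemma orthComp_biSup {κ : Type} (s : Finset κ) (F : κ → Submodule ℂ (ι → ℂ)) :
    orthComp (⨆ k ∈ s, F k) = ⨅ k ∈ s, orthComp (F k) := by
  apply le_antisymm
  · exact le_iInf₂ fun k hk => orthComp_anti (le_iSup₂ (f := fun k _ => F k) k hk)
  · intro x hx
    simp only [Submodule.mem_iInf] at hx
    rw [mem_orthComp]
    intro y hy
    have hle : (⨆ k ∈ s, F k) ≤ dker x :=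
      iSup₂_le fun k hk z hz => (hx k hk) z hz
    exact hle hy

/-- The Euclidean-space linear equivalence. -/
def eqv : EuclideanSpace ℂ ι ≃ₗ[ℂ] (ι → ℂ) := WithLp.linearEquiv 2 ℂ (ι → ℂ)

lemma inner_eqv (u v : EuclideanSpace ℂ ι) :
    (inner ℂ u v : ℂ) = star ((eqv : EuclideanSpace ℂ ι ≃ₗ[ℂ] (ι → ℂ)) u) ⬝ᵥ eqv v := by
  rw [EuclideanSpace.inner_eq_star_dotProduct, dotProduct_comm]
  rfl

lemma orthComp_eq_map (S : Submodule ℂ (ι → ℂ)) :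
    orthComp S = ((S.comap (eqv : EuclideanSpace ℂ ι ≃ₗ[ℂ] (ι → ℂ)).toLinearMap)ᗮ).map
      (eqv : EuclideanSpace ℂ ι ≃ₗ[ℂ] (ι → ℂ)).toLinearMap := by
  ext x
  rw [Submodule.mem_map]
  constructor
  · intro hx
    refine ⟨(eqv : EuclideanSpace ℂ ι ≃ₗ[ℂ] (ι → ℂ)).symm x, ?_, by simp⟩
    rw [Submodule.mem_orthogonal]
    intro u hu
    rw [Submodule.mem_comap] at hu
    rw [inner_eqv]
    simp only [LinearEquiv.coe_coe, LinearEquiv.apply_symm_apply]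
    exact hx _ hu
  · rintro ⟨v, hv, rfl⟩
    rw [mem_orthComp]
    intro y hy
    rw [Submodule.mem_orthogonal] at hv
    have := hv ((eqv : EuclideanSpace ℂ ι ≃ₗ[ℂ] (ι → ℂ)).symm y)
      (by rw [Submodule.mem_comap]; simpa)
    rw [inner_eqv] at this
    simpa using this

lemma orthComp_orthComp (S : Submodule ℂ (ι → ℂ)) : orthComp (orthComp S) = S := by
  have h1 : (orthComp S).comap (eqv : EuclideanSpace ℂ ι ≃ₗ[ℂ] (ι → ℂ)).toLinearMap
      = (S.comap (eqv : EuclideanSpace ℂ ι ≃ₗ[ℂ] (ι → ℂ)).toLinearMap)ᗮ := by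
    rw [orthComp_eq_map S]
    exact Submodule.comap_map_eq_of_injective (LinearEquiv.injective _) _
  rw [orthComp_eq_map (orthComp S), h1, Submodule.orthogonal_orthogonal]
  exact Submodule.map_comap_eq_of_surjective (LinearEquiv.surjective _) S

lemma star_mulVec_dot {κ : Type} [Fintype κ] (M : Matrix ι κ ℂ) (u : κ → ℂ) (x : ι → ℂ) :
    star (M *ᵥ u) ⬝ᵥ x = star u ⬝ᵥ (Mᴴ *ᵥ x) := by
  rw [Matrix.star_mulVec, ← Matrix.dotProduct_mulVec]

lemma dot_forall_zero {v : ι → ℂ} (h : ∀ u : ι → ℂ, star u ⬝ᵥ v = 0) : v = 0 := by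
  funext i
  have := h (Pi.single i 1)
  have hstar : (star (Pi.single i (1:ℂ)) : ι → ℂ) = (Pi.single i (1:ℂ) : ι → ℂ) := by
    funext j
    simp [Pi.star_apply, Pi.single_apply, apply_ite]
  rw [hstar, single_dotProduct, one_mul] at this
  simpa using this

lemma ker_eq_orthComp_range {κ : Type} [Fintype κ] [DecidableEq κ]
    (M : Matrix κ ι ℂ) :
    LinearMap.ker M.mulVecLin = orthComp (LinearMap.range (Mᴴ).mulVecLin) := by
  ext x
  rw [LinearMap.mem_ker, mem_orthComp]
  constructor
  · rintro h y ⟨u, rfl⟩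
    rw [Matrix.mulVecLin_apply, star_mulVec_dot, Matrix.conjTranspose_conjTranspose]
    rw [Matrix.mulVecLin_apply] at h
    rw [h, dotProduct_zero]
  · intro h
    rw [Matrix.mulVecLin_apply]
    apply dot_forall_zero
    intro u
    have := h (Mᴴ *ᵥ u) ⟨u, rfl⟩
    rwa [star_mulVec_dot, Matrix.conjTranspose_conjTranspose] at this

end OC

end QLS

namespace QLS

section Ctrl

variable {ι κ : Type} [Fintype ι] [Fintype κ] [DecidableEq ι]

def cS (j : ℕ) (A : Matrix ι ι ℂ) (B : Matrix ι κ ℂ) : Submodule ℂ (ι → ℂ) :=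
  ⨆ k ∈ Finset.range j, LinearMap.range ((A ^ k * B).mulVecLin)

def cT (A : Matrix ι ι ℂ) (B : Matrix ι κ ℂ) : Submodule ℂ (ι → ℂ) :=
  ⨆ k : ℕ, LinearMap.range ((A ^ k * B).mulVecLin)

lemma range_succ_eq (A : Matrix ι ι ℂ) (B : Matrix ι κ ℂ) (k : ℕ) :
    LinearMap.range ((A ^ (k+1) * B).mulVecLin)
      = Submodule.map A.mulVecLin (LinearMap.range ((A ^ k * B).mulVecLin)) := by
  rw [pow_succ', Matrix.mul_assoc, Matrix.mulVecLin_mul, LinearMap.range_comp]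

lemma cS_succ (A : Matrix ι ι ℂ) (B : Matrix ι κ ℂ) (j : ℕ) :
    cS (j+1) A B = LinearMap.range ((A ^ j * B).mulVecLin) ⊔ cS j A B := by
  rw [cS, Finset.range_add_one, Finset.iSup_insert]
  rfl

lemma cS_mono (A : Matrix ι ι ℂ) (B : Matrix ι κ ℂ) {j j' : ℕ} (h : j ≤ j') :
    cS j A B ≤ cS j' A B :=
  biSup_mono fun _ hk => Finset.mem_range.mpr ((Finset.mem_range.mp hk).trans_le h)

lemma range_le_cS (A : Matrix ι ι ℂ) (B : Matrix ι κ ℂ) {k j : ℕ} (hk : k < j) :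
    LinearMap.range ((A ^ k * B).mulVecLin) ≤ cS j A B :=
  le_iSup₂ (f := fun k (_ : k ∈ Finset.range j) => LinearMap.range ((A ^ k * B).mulVecLin))
    k (Finset.mem_range.mpr hk)

lemma map_cS_le (A : Matrix ι ι ℂ) (B : Matrix ι κ ℂ) (j : ℕ) :
    Submodule.map A.mulVecLin (cS j A B) ≤ cS (j+1) A B := by
  rw [Submodule.map_le_iff_le_comap]
  refine iSup₂_le fun k hk => ?_
  rw [← Submodule.map_le_iff_le_comap, ← range_succ_eq]
  exact range_le_cS A B (by simpa using Finset.mem_range.mp hk)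

lemma cS_stab_range (A : Matrix ι ι ℂ) (B : Matrix ι κ ℂ) {j : ℕ}
    (h : cS (j+1) A B = cS j A B) :
    ∀ d, LinearMap.range ((A ^ (j + d) * B).mulVecLin) ≤ cS j A B := by
  intro d
  induction d with
  | zero => rw [← h]; exact range_le_cS A B (Nat.lt_succ_self j)
  | succ d ih =>
      have : j + (d + 1) = (j + d) + 1 := by omega
      rw [this, range_succ_eq]
      refine (Submodule.map_mono ih).trans ?_
      exact (map_cS_le A B j).trans h.le

lemma cS_stab (A : Matrix ι ι ℂ) (B : Matrix ι κ ℂ) {j : ℕ}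
    (h : cS (j+1) A B = cS j A B) :
    ∀ d, cS (j + d) A B = cS j A B := by
  intro d
  induction d with
  | zero => rfl
  | succ d ih =>
      have heq : j + (d + 1) = (j + d) + 1 := by omega
      rw [heq, cS_succ]
      rw [ih]
      refine le_antisymm (sup_le (cS_stab_range A B h d) le_rfl) le_sup_right

lemma exists_stab (A : Matrix ι ι ℂ) (B : Matrix ι κ ℂ) :
    ∃ j ≤ Module.finrank ℂ (ι → ℂ), cS (j+1) A B = cS j A B := by
  set N := Module.finrank ℂ (ι → ℂ) with hN
  by_contra hc
  push_neg at hc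
  have hstrict : ∀ j ≤ N, cS j A B < cS (j+1) A B := by
    intro j hj
    exact lt_of_le_of_ne (cS_mono A B (Nat.le_succ j)) fun he => hc j hj he.symm
  have hrank : ∀ j, j ≤ N + 1 → j ≤ Module.finrank ℂ (cS j A B) := by
    intro j
    induction j with
    | zero => intro _; exact Nat.zero_le _
    | succ j ih =>
        intro hj
        have h1 := Submodule.finrank_lt_finrank_of_lt (hstrict j (by omega))
        have h2 := ih (by omega)
        omega
  have h3 := hrank (N+1) le_rfl
  have h4 := Submodule.finrank_le (cS (N+1) A B)
  omega

lemma cS_eq_cT {N : ℕ} (hN : Module.finrank ℂ (ι → ℂ) ≤ N)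
    (A : Matrix ι ι ℂ) (B : Matrix ι κ ℂ) : cS N A B = cT A B := by
  obtain ⟨j, hj, hstab⟩ := exists_stab A B
  have hj' : j ≤ N := hj.trans hN
  have key : ∀ i, j ≤ i → cS i A B = cS j A B := by
    intro i hi
    obtain ⟨d, rfl⟩ := Nat.exists_eq_add_of_le hi
    exact cS_stab A B hstab d
  apply le_antisymm
  · exact iSup₂_le fun k _ => le_iSup (fun k => LinearMap.range ((A ^ k * B).mulVecLin)) k
  · refine iSup_le fun k => ?_
    have h1 : LinearMap.range ((A ^ k * B).mulVecLin) ≤ cS (k + 1 + N) A B :=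
      (range_le_cS A B (Nat.lt_succ_self k)).trans (cS_mono A B (by omega))
    rw [key (k+1+N) (by omega), ← key N hj'] at h1
    exact h1

lemma cT_range_B_le (A : Matrix ι ι ℂ) (B : Matrix ι κ ℂ) :
    LinearMap.range B.mulVecLin ≤ cT A B := by
  have h := le_iSup (fun k => LinearMap.range ((A ^ k * B).mulVecLin)) 0
  rwa [pow_zero, Matrix.one_mul] at h

lemma cT_map_A_le (A : Matrix ι ι ℂ) (B : Matrix ι κ ℂ) :
    Submodule.map A.mulVecLin (cT A B) ≤ cT A B := by
  rw [cT, Submodule.map_iSup]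
  refine iSup_le fun k => ?_
  rw [← range_succ_eq]
  exact le_iSup (fun k => LinearMap.range ((A ^ k * B).mulVecLin)) (k+1)

lemma cT_min (A : Matrix ι ι ℂ) (B : Matrix ι κ ℂ) (W : Submodule ℂ (ι → ℂ))
    (hB : LinearMap.range B.mulVecLin ≤ W)
    (hA : Submodule.map A.mulVecLin W ≤ W) : cT A B ≤ W := by
  have : ∀ k, LinearMap.range ((A ^ k * B).mulVecLin) ≤ W := by
    intro k
    induction k with
    | zero => rwa [pow_zero, Matrix.one_mul]
    | succ k ih =>
        rw [range_succ_eq]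
        exact (Submodule.map_mono ih).trans hA
  exact iSup_le this

lemma cT_fb_le (A : Matrix ι ι ℂ) (B : Matrix ι κ ℂ) (K : Matrix κ ι ℂ) :
    cT (-A + B * K) B ≤ cT A B := by
  refine cT_min _ _ _ (cT_range_B_le A B) ?_
  rintro y ⟨x, hx, rfl⟩
  rw [Matrix.mulVecLin_apply, Matrix.add_mulVec, Matrix.neg_mulVec, ← Matrix.mulVec_mulVec]
  refine Submodule.add_mem _ (Submodule.neg_mem _ ?_) ?_
  · exact cT_map_A_le A B ⟨x, hx, rfl⟩
  · exact cT_range_B_le A B ⟨K *ᵥ x, rfl⟩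

lemma cT_feedback (A : Matrix ι ι ℂ) (B : Matrix ι κ ℂ) (K : Matrix κ ι ℂ) :
    cT (-A + B * K) B = cT A B := by
  refine le_antisymm (cT_fb_le A B K) ?_
  have h2 := cT_fb_le (-A + B * K) B K
  have : -(-A + B * K) + B * K = A := by abel
  rwa [this] at h2

end Ctrl

end QLS

namespace QLS

section Extract

variable {n : ℕ}

def emb1 (n : ℕ) : (Fin n → ℂ) →ₗ[ℂ] (Fin n ⊕ Fin n → ℂ) where
  toFun u := Sum.elim u 0
  map_add' u v := by funext p; cases p <;> simp
  map_smul' c u := by funext p; cases p <;> simp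

def emb2 (n : ℕ) : (Fin n → ℂ) →ₗ[ℂ] (Fin n ⊕ Fin n → ℂ) where
  toFun u := Sum.elim 0 u
  map_add' u v := by funext p; cases p <;> simp
  map_smul' c u := by funext p; cases p <;> simp

def cvec {r : ℕ} (x : Fin r → ℂ) : Fin r → ℂ := fun i => (starRingEnd ℂ) (x i)

lemma cvec_cvec {r : ℕ} (x : Fin r → ℂ) : cvec (cvec x) = x := by
  funext i; simp [cvec]

lemma mconj_mulVec {r : ℕ} (Z : Matrix (Fin n) (Fin r) ℂ) (c : Fin r → ℂ) :
    (mconj Z) *ᵥ c = cvec (Z *ᵥ cvec c) := by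
  funext i
  simp only [mconj, cvec, Matrix.mulVec, dotProduct, map_sum, _root_.map_mul,
    Complex.conj_conj, Matrix.map_apply]

lemma extract (V : Submodule ℂ (Fin n ⊕ Fin n → ℂ))
    (hJ : ∀ x ∈ V, Jmat n *ᵥ x ∈ V) (hT : ∀ x ∈ V, Tv x ∈ V) :
    ∃ (r : ℕ) (Z : Matrix (Fin n) (Fin r) ℂ), Zᴴ * Z = 1 ∧
      LinearMap.range ((Matrix.fromBlocks Z 0 0 (mconj Z)).mulVecLin) = V := by
  classical
  set S₁ : Submodule ℂ (Fin n → ℂ) := V.comap (emb1 n) with hS₁def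
  set S₂ : Submodule ℂ (Fin n → ℂ) := V.comap (emb2 n) with hS₂def
  have hsplit1 : ∀ x ∈ V, (fun i => x (Sum.inl i)) ∈ S₁ := by
    intro x hx
    rw [hS₁def, Submodule.mem_comap]
    have h2 : emb1 n (fun i => x (Sum.inl i)) = (2⁻¹ : ℂ) • (x + Jmat n *ᵥ x) := by
      funext p
      rw [Jmat_mulVec]
      cases p <;> simp [emb1, sgn] <;> ring
    rw [h2]
    exact Submodule.smul_mem _ _ (Submodule.add_mem _ hx (hJ x hx))
  have hsplit2 : ∀ x ∈ V, (fun i => x (Sum.inr i)) ∈ S₂ := by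
    intro x hx
    rw [hS₂def, Submodule.mem_comap]
    have h2 : emb2 n (fun i => x (Sum.inr i)) = (2⁻¹ : ℂ) • (x - Jmat n *ᵥ x) := by
      funext p
      rw [Jmat_mulVec]
      cases p <;> simp [emb2, sgn] <;> ring
    rw [h2]
    exact Submodule.smul_mem _ _ (Submodule.sub_mem _ hx (hJ x hx))
  have hTS : ∀ u : Fin n → ℂ, cvec u ∈ S₂ ↔ u ∈ S₁ := by
    intro u
    have key1 : Tv (emb1 n u) = emb2 n (cvec u) := by
      funext p; cases p <;> simp [Tv, emb1, emb2, cvec, Sum.swap]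
    have key2 : Tv (emb2 n (cvec u)) = emb1 n u := by
      funext p; cases p <;> simp [Tv, emb1, emb2, cvec, Sum.swap]
    constructor
    · intro h
      have h' := hT _ (Submodule.mem_comap.mp h)
      rw [key2] at h'
      exact Submodule.mem_comap.mpr h'
    · intro h
      have h' := hT _ (Submodule.mem_comap.mp h)
      rw [key1] at h'
      exact Submodule.mem_comap.mpr h'
  set L : EuclideanSpace ℂ (Fin n) ≃ₗ[ℂ] (Fin n → ℂ) :=
    (eqv : EuclideanSpace ℂ (Fin n) ≃ₗ[ℂ] (Fin n → ℂ)) with hLdef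
  set S₁' : Submodule ℂ (EuclideanSpace ℂ (Fin n)) := S₁.comap L.toLinearMap with hS₁'def
  set r := Module.finrank ℂ S₁' with hrdef
  set b := stdOrthonormalBasis ℂ ↥S₁' with hbdef
  set Z : Matrix (Fin n) (Fin r) ℂ :=
    Matrix.of (fun i j => L ((b j : EuclideanSpace ℂ (Fin n))) i) with hZdef
  have hZapp : ∀ i j, Z i j = L ((b j : EuclideanSpace ℂ (Fin n))) i := fun i j => rfl
  have hZ1 : Zᴴ * Z = 1 := by
    ext j j'
    rw [Matrix.mul_apply, Matrix.one_apply]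
    have horth := b.orthonormal
    rw [orthonormal_iff_ite] at horth
    have h := horth j j'
    rw [Submodule.coe_inner, inner_eqv] at h
    rw [← h]
    rw [dotProduct]
    refine Finset.sum_congr rfl fun i _ => ?_
    rw [Matrix.conjTranspose_apply, hZapp, hZapp]
    rfl
  have hcol : ∀ j, L ((b j : EuclideanSpace ℂ (Fin n))) ∈ S₁ := by
    intro j
    exact Submodule.mem_comap.mp (b j).2
  have hmv : ∀ c : Fin r → ℂ, Z *ᵥ c = ∑ j, c j • L ((b j : EuclideanSpace ℂ (Fin n))) := by
    intro c
    funext i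
    rw [Matrix.mulVec, dotProduct, Finset.sum_apply]
    refine Finset.sum_congr rfl fun j _ => ?_
    rw [hZapp, Pi.smul_apply, smul_eq_mul, mul_comm]
  have hrangeZ : LinearMap.range Z.mulVecLin = S₁ := by
    apply le_antisymm
    · rintro y ⟨c, rfl⟩
      rw [Matrix.mulVecLin_apply, hmv]
      exact Submodule.sum_mem _ fun j _ => Submodule.smul_mem _ _ (hcol j)
    · intro u hu
      have hu' : L.symm u ∈ S₁' := by
        rw [hS₁'def, Submodule.mem_comap]
        simpa using hu
      refine ⟨fun j => b.repr ⟨L.symm u, hu'⟩ j, ?_⟩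
      rw [Matrix.mulVecLin_apply, hmv]
      have h5 : ((∑ i, b.repr ⟨L.symm u, hu'⟩ i • b i : ↥S₁') : EuclideanSpace ℂ (Fin n))
          = L.symm u := by rw [b.sum_repr ⟨L.symm u, hu'⟩]
      calc ∑ j, b.repr ⟨L.symm u, hu'⟩ j • L ((b j : EuclideanSpace ℂ (Fin n)))
          = L ((∑ i, b.repr ⟨L.symm u, hu'⟩ i • b i : ↥S₁') : EuclideanSpace ℂ (Fin n)) := by
            simp only [AddSubmonoidClass.coe_finset_sum, SetLike.val_smul, map_sum]
            exact Finset.sum_congr rfl fun j _ => (_root_.map_smul L _ _).symm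
        _ = u := by rw [h5, L.apply_symm_apply]
  have hmconjr : ∀ y, y ∈ LinearMap.range (mconj Z).mulVecLin ↔ cvec y ∈ S₁ := by
    intro y
    rw [← hrangeZ]
    constructor
    · rintro ⟨c, rfl⟩
      refine ⟨cvec c, ?_⟩
      rw [Matrix.mulVecLin_apply, Matrix.mulVecLin_apply, mconj_mulVec, cvec_cvec]
    · rintro ⟨c, hc⟩
      refine ⟨cvec c, ?_⟩
      rw [Matrix.mulVecLin_apply, mconj_mulVec, cvec_cvec]
      rw [Matrix.mulVecLin_apply] at hc
      rw [hc, cvec_cvec]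
  have hS₂r : ∀ y, y ∈ LinearMap.range (mconj Z).mulVecLin ↔ y ∈ S₂ := by
    intro y
    rw [hmconjr y]
    have := hTS (cvec y)
    rw [cvec_cvec] at this
    exact this.symm
  refine ⟨r, Z, hZ1, ?_⟩
  ext x
  rw [LinearMap.mem_range]
  constructor
  · rintro ⟨c, rfl⟩
    rw [Matrix.mulVecLin_apply, Matrix.fromBlocks_mulVec]
    rw [Matrix.zero_mulVec, Matrix.zero_mulVec, add_zero, zero_add]
    have hu : (Z *ᵥ (c ∘ Sum.inl)) ∈ S₁ := by
      rw [← hrangeZ]; exact ⟨c ∘ Sum.inl, rfl⟩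
    have hv : ((mconj Z) *ᵥ (c ∘ Sum.inr)) ∈ S₂ := by
      rw [← hS₂r]; exact ⟨c ∘ Sum.inr, rfl⟩
    have helim : (Sum.elim (Z *ᵥ (c ∘ Sum.inl)) ((mconj Z) *ᵥ (c ∘ Sum.inr)) : Fin n ⊕ Fin n → ℂ)
        = emb1 n (Z *ᵥ (c ∘ Sum.inl)) + emb2 n ((mconj Z) *ᵥ (c ∘ Sum.inr)) := by
      funext p; cases p <;> simp [emb1, emb2]
    show Sum.elim (Z *ᵥ (c ∘ Sum.inl)) ((mconj Z) *ᵥ (c ∘ Sum.inr)) ∈ V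
    rw [helim]
    exact V.add_mem (Submodule.mem_comap.mp hu) (Submodule.mem_comap.mp hv)
  · intro hx
    have h1 := hsplit1 x hx
    have h2 := hsplit2 x hx
    rw [← hrangeZ] at h1
    rw [← hS₂r _] at h2
    obtain ⟨c₁, hc₁⟩ := h1
    obtain ⟨c₂, hc₂⟩ := h2
    refine ⟨Sum.elim c₁ c₂, ?_⟩
    rw [Matrix.mulVecLin_apply, Matrix.fromBlocks_mulVec]
    rw [Matrix.zero_mulVec, Matrix.zero_mulVec, add_zero, zero_add]
    funext p
    cases p with
    | inl i =>
        show (Z *ᵥ (Sum.elim c₁ c₂ ∘ Sum.inl)) i = x (Sum.inl i)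
        have : (Sum.elim c₁ c₂ ∘ Sum.inl : Fin r → ℂ) = c₁ := rfl
        rw [this]
        exact congrFun hc₁ i
    | inr i =>
        show ((mconj Z) *ᵥ (Sum.elim c₁ c₂ ∘ Sum.inr)) i = x (Sum.inr i)
        have : (Sum.elim c₁ c₂ ∘ Sum.inr : Fin r → ℂ) = c₂ := rfl
        rw [this]
        exact congrFun hc₂ i

end Extract

end QLS

namespace QLS

section Glue

variable {n m : ℕ}

lemma star_Tv_dot (z x : Fin n ⊕ Fin n → ℂ) :
    star (Tv z) ⬝ᵥ Tv x = (starRingEnd ℂ) (star z ⬝ᵥ x) := by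
  rw [dotProduct, dotProduct, map_sum]
  rw [← Equiv.sum_comp (Equiv.sumComm (Fin n) (Fin n))
      (g := fun p => star (Tv z) p * Tv x p)]
  refine Finset.sum_congr rfl fun p _ => ?_
  have h : (Equiv.sumComm (Fin n) (Fin n)) p = p.swap := rfl
  rw [h]
  simp only [Tv, Pi.star_apply, _root_.map_mul, Sum.swap_swap, Complex.conj_conj,
    Complex.star_def]

lemma tv_orthComp {S : Submodule ℂ (Fin n ⊕ Fin n → ℂ)} (hS : ∀ x ∈ S, Tv x ∈ S) :
    ∀ x ∈ orthComp S, Tv x ∈ orthComp S := by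
  intro x hx
  rw [mem_orthComp]
  intro y hy
  have h1 := star_Tv_dot (Tv y) x
  rw [Tv_Tv] at h1
  rw [h1, hx (Tv y) (hS y hy), map_zero]

lemma mem_mapJ {S : Submodule ℂ (Fin n ⊕ Fin n → ℂ)} {x : Fin n ⊕ Fin n → ℂ} :
    x ∈ Submodule.map (Jmat n).mulVecLin S ↔ Jmat n *ᵥ x ∈ S := by
  constructor
  · rintro ⟨s, hs, rfl⟩
    rw [Matrix.mulVecLin_apply, Jmat_mulVec_mulVec]
    exact hs
  · intro h
    exact ⟨Jmat n *ᵥ x, h, by rw [Matrix.mulVecLin_apply, Jmat_mulVec_mulVec]⟩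

lemma orthComp_mapJ (S : Submodule ℂ (Fin n ⊕ Fin n → ℂ)) :
    orthComp (Submodule.map (Jmat n).mulVecLin S)
      = Submodule.map (Jmat n).mulVecLin (orthComp S) := by
  ext x
  rw [mem_mapJ, mem_orthComp, mem_orthComp]
  constructor
  · intro hx s hs
    have h0 : Jmat n *ᵥ (Jmat n *ᵥ s) ∈ S := by rw [Jmat_mulVec_mulVec]; exact hs
    have := hx (Jmat n *ᵥ s) (mem_mapJ.mpr h0)
    rwa [star_mulVec_dot, JH] at this
  · intro hx y hy
    obtain ⟨s, hs, rfl⟩ := hy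
    rw [Matrix.mulVecLin_apply, star_mulVec_dot, JH]
    exact hx s hs

lemma tv_mapJ {S : Submodule ℂ (Fin n ⊕ Fin n → ℂ)} (hS : ∀ x ∈ S, Tv x ∈ S) :
    ∀ x ∈ Submodule.map (Jmat n).mulVecLin S,
      Tv x ∈ Submodule.map (Jmat n).mulVecLin S := by
  intro x hx
  rw [mem_mapJ] at hx ⊢
  have key : Jmat n *ᵥ Tv x = -Tv (Jmat n *ᵥ x) := by
    funext p
    simp only [Jmat_mulVec, Tv, Pi.neg_apply, _root_.map_mul, sgn_swap, sgn_conj, map_neg]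
    ring
  rw [key]
  exact Submodule.neg_mem _ (hS _ hx)

lemma jinv_inf {S : Submodule ℂ (Fin n ⊕ Fin n → ℂ)} :
    ∀ x ∈ S ⊓ Submodule.map (Jmat n).mulVecLin S,
      Jmat n *ᵥ x ∈ S ⊓ Submodule.map (Jmat n).mulVecLin S := by
  rintro x ⟨h1, h2⟩
  refine ⟨mem_mapJ.mp h2, mem_mapJ.mpr ?_⟩
  rw [Jmat_mulVec_mulVec]
  exact h1

lemma rangeNegJXJ (X : Matrix (Fin n ⊕ Fin n) (Fin m ⊕ Fin m) ℂ) :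
    LinearMap.range ((-(Jmat n * X * Jmat m)).mulVecLin)
      = Submodule.map (Jmat n).mulVecLin (LinearMap.range X.mulVecLin) := by
  ext y
  constructor
  · rintro ⟨u, rfl⟩
    refine ⟨X *ᵥ (Jmat m *ᵥ (-u)), ⟨Jmat m *ᵥ (-u), rfl⟩, ?_⟩
    rw [Matrix.mulVecLin_apply, Matrix.mulVecLin_apply, Matrix.mulVec_mulVec,
      Matrix.mulVec_mulVec, Matrix.mulVec_neg, Matrix.neg_mulVec]
  · rintro ⟨z, ⟨u, rfl⟩, rfl⟩
    refine ⟨-(Jmat m *ᵥ u), ?_⟩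
    rw [Matrix.mulVecLin_apply, Matrix.mulVecLin_apply, Matrix.mulVecLin_apply]
    rw [Matrix.mulVec_neg, Matrix.neg_mulVec, neg_neg, Matrix.mulVec_mulVec,
      Matrix.mul_assoc, Matrix.mul_assoc, JmulJ, Matrix.mul_one, Matrix.mulVec_mulVec]

def TvSub (S : Submodule ℂ (Fin n ⊕ Fin n → ℂ)) : Submodule ℂ (Fin n ⊕ Fin n → ℂ) where
  carrier := {x | Tv x ∈ S}
  add_mem' := by
    intro a b ha hb
    simp only [Set.mem_setOf_eq, Tv_add] at *
    exact S.add_mem ha hb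
  zero_mem' := by
    simp only [Set.mem_setOf_eq, Tv_zero]
    exact S.zero_mem
  smul_mem' := by
    intro c x hx
    simp only [Set.mem_setOf_eq, Tv_smul] at *
    exact S.smul_mem _ hx

lemma tv_cS {𝒜 : Matrix (Fin n ⊕ Fin n) (Fin n ⊕ Fin n) ℂ}
    {ℬ : Matrix (Fin n ⊕ Fin n) (Fin m ⊕ Fin m) ℂ}
    (hA : DU 𝒜) (hB : DU ℬ) (j : ℕ) :
    ∀ x ∈ cS j 𝒜 ℬ, Tv x ∈ cS j 𝒜 ℬ := by
  intro x hx
  have hle : cS j 𝒜 ℬ ≤ TvSub (cS j 𝒜 ℬ) := by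
    refine iSup₂_le fun k hk => ?_
    rintro y ⟨u, rfl⟩
    show Tv ((𝒜 ^ k * ℬ).mulVecLin u) ∈ cS j 𝒜 ℬ
    have hDU : DU (𝒜 ^ k * ℬ) := (hA.pow k).mul hB
    rw [Matrix.mulVecLin_apply, ← hDU.mulVec_Tv]
    exact range_le_cS _ _ (Finset.mem_range.mp hk) ⟨Tv u, rfl⟩
  exact hle hx

end Glue

end QLS

/-- **Lemma (basis of `R_co` and `R_c̄ō`).** For a general linear quantum system there exist
`n₁ ≥ 0` and `Z₁ ∈ ℂ^{n×n₁}` with `Z₁ᴴZ₁ = I` whose block-diagonal matrix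
`[Z₁ 0; 0 conj Z₁]` has column space `R_co`, and similarly `n₂, Z₂` for `R_c̄ō`. -/
theorem exists_doubled_basis_Rco_Rncnoo
    (n m : ℕ) (hn : 0 < n) (hm : 0 < m)
    (Ωm Ωp : Matrix (Fin n) (Fin n) ℂ) (Cm Cp : Matrix (Fin m) (Fin n) ℂ)
    (Ω : Matrix (Fin n ⊕ Fin n) (Fin n ⊕ Fin n) ℂ) (hΩ : Ω = doubledUp Ωm Ωp)
    (hΩH : Ω.IsHermitian)
    (𝒞 : Matrix (Fin m ⊕ Fin m) (Fin n ⊕ Fin n) ℂ) (h𝒞 : 𝒞 = doubledUp Cm Cp)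
    (𝒜 : Matrix (Fin n ⊕ Fin n) (Fin n ⊕ Fin n) ℂ)
    (h𝒜 : 𝒜 = (-Complex.I) • (Jmat n * Ω) - (1 / 2 : ℂ) • (flat 𝒞 * 𝒞))
    (ℬ : Matrix (Fin n ⊕ Fin n) (Fin m ⊕ Fin m) ℂ) (hℬ : ℬ = -flat 𝒞) :
    (∃ (n₁ : ℕ) (Z₁ : Matrix (Fin n) (Fin n₁) ℂ),
      Z₁ᴴ * Z₁ = 1 ∧
      LinearMap.range ((Matrix.fromBlocks Z₁ 0 0 (mconj Z₁)).mulVecLin) =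
        ctrbSub n m 𝒜 ℬ ⊓ orthComp (unobsSub n m 𝒜 𝒞)) ∧
    (∃ (n₂ : ℕ) (Z₂ : Matrix (Fin n) (Fin n₂) ℂ),
      Z₂ᴴ * Z₂ = 1 ∧
      LinearMap.range ((Matrix.fromBlocks Z₂ 0 0 (mconj Z₂)).mulVecLin) =
        orthComp (ctrbSub n m 𝒜 ℬ) ⊓ unobsSub n m 𝒜 𝒞) := by
  classical
  have hDUΩ : QLS.DU Ω := by rw [hΩ]; exact QLS.DU.doubledUp Ωm Ωp
  have hDU𝒞 : QLS.DU 𝒞 := by rw [h𝒞]; exact QLS.DU.doubledUp Cm Cp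
  have hDUℬ : QLS.DU ℬ := by rw [hℬ]; exact hDU𝒞.flat.neg
  have hhalf : (starRingEnd ℂ) (1/2 : ℂ) = 1/2 := Complex.conj_eq_iff_im.mpr (by norm_num)
  have hDU𝒜 : QLS.DU 𝒜 := by
    rw [h𝒜]
    exact (hDUΩ.jsmul).sub (QLS.DU.smul hhalf (hDU𝒞.flat.mul hDU𝒞))
  set A' : Matrix (Fin n ⊕ Fin n) (Fin n ⊕ Fin n) ℂ := -𝒜 + ℬ * 𝒞 with hA'def
  have hCH : 𝒞ᴴ = -(Jmat n * ℬ * Jmat m) := by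
    rw [hℬ]
    show 𝒞ᴴ = -(Jmat n * -(Jmat n * 𝒞ᴴ * Jmat m) * Jmat m)
    simp only [Matrix.mul_neg, Matrix.neg_mul, neg_neg, Matrix.mul_assoc, QLS.JmulJ,
      Matrix.mul_one, QLS.Jcancel]
  have hA'eq : A' = Complex.I • (Jmat n * Ω) - (1/2 : ℂ) • (flat 𝒞 * 𝒞) := by
    rw [hA'def, h𝒜, hℬ, Matrix.neg_mul]
    module
  have hAH : 𝒜ᴴ = Jmat n * A' * Jmat n := by
    rw [hA'eq, h𝒜]
    show ((-Complex.I) • (Jmat n * Ω) - (1/2 : ℂ) • (Jmat n * 𝒞ᴴ * Jmat m * 𝒞))ᴴ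
        = Jmat n * (Complex.I • (Jmat n * Ω)
            - (1/2 : ℂ) • (Jmat n * 𝒞ᴴ * Jmat m * 𝒞)) * Jmat n
    simp only [Matrix.conjTranspose_sub, Matrix.conjTranspose_smul, Matrix.conjTranspose_mul,
      Matrix.conjTranspose_conjTranspose, QLS.JH, hΩH.eq, star_neg, Complex.star_def,
      Complex.conj_I, hhalf, Matrix.mul_sub, Matrix.sub_mul, Matrix.mul_smul, Matrix.smul_mul,
      Matrix.mul_assoc, QLS.Jcancel, QLS.JmulJ, Matrix.mul_one, Matrix.one_mul, neg_neg]
  have hobs : ∀ k : ℕ, (𝒞 * 𝒜 ^ k)ᴴ = -(Jmat n * (A' ^ k * ℬ) * Jmat m) := by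
    intro k
    induction k with
    | zero => rw [pow_zero, pow_zero, Matrix.mul_one, Matrix.one_mul]; exact hCH
    | succ k ih =>
        rw [pow_succ, ← Matrix.mul_assoc, Matrix.conjTranspose_mul, ih, hAH, pow_succ']
        simp only [Matrix.mul_neg, Matrix.neg_mul, Matrix.mul_assoc, QLS.Jcancel,
          QLS.JmulJ, Matrix.mul_one]
  set Jlin := (Jmat n).mulVecLin with hJlindef
  have hfin : Module.finrank ℂ (Fin n ⊕ Fin n → ℂ) ≤ 2 * n := by
    rw [Module.finrank_pi]
    simp only [Fintype.card_sum, Fintype.card_fin]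
    omega
  have hcS : ctrbSub n m 𝒜 ℬ = QLS.cS (2*n) 𝒜 ℬ := rfl
  have hmapc : Submodule.map Jlin (QLS.cS (2*n) A' ℬ)
      = ⨆ k ∈ Finset.range (2*n),
          Submodule.map Jlin (LinearMap.range ((A' ^ k * ℬ).mulVecLin)) := by
    simp only [QLS.cS]
    rw [Submodule.map_iSup]
    exact iSup_congr fun k => Submodule.map_iSup Jlin _
  have hSsup : (⨆ k ∈ Finset.range (2*n), LinearMap.range (((𝒞 * 𝒜 ^ k)ᴴ).mulVecLin))
      = Submodule.map Jlin (ctrbSub n m 𝒜 ℬ) := by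
    have h1 : ∀ k : ℕ, LinearMap.range (((𝒞 * 𝒜 ^ k)ᴴ).mulVecLin)
        = Submodule.map Jlin (LinearMap.range ((A' ^ k * ℬ).mulVecLin)) := by
      intro k; rw [hobs k, hJlindef, QLS.rangeNegJXJ]
    calc (⨆ k ∈ Finset.range (2*n), LinearMap.range (((𝒞 * 𝒜 ^ k)ᴴ).mulVecLin))
        = ⨆ k ∈ Finset.range (2*n),
            Submodule.map Jlin (LinearMap.range ((A' ^ k * ℬ).mulVecLin)) :=
          iSup_congr fun k => iSup_congr fun _ => h1 k
      _ = Submodule.map Jlin (QLS.cS (2*n) A' ℬ) := hmapc.symm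
      _ = Submodule.map Jlin (QLS.cT A' ℬ) := by rw [QLS.cS_eq_cT hfin]
      _ = Submodule.map Jlin (QLS.cT 𝒜 ℬ) := by rw [hA'def, QLS.cT_feedback]
      _ = Submodule.map Jlin (ctrbSub n m 𝒜 ℬ) := by rw [hcS, QLS.cS_eq_cT hfin]
  have hunobs : unobsSub n m 𝒜 𝒞 = orthComp (Submodule.map Jlin (ctrbSub n m 𝒜 ℬ)) := by
    have e1 : unobsSub n m 𝒜 𝒞 = ⨅ k ∈ Finset.range (2*n),
        orthComp (LinearMap.range (((𝒞 * 𝒜 ^ k)ᴴ).mulVecLin)) := by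
      show (⨅ k ∈ Finset.range (2*n), LinearMap.ker ((𝒞 * 𝒜 ^ k).mulVecLin)) = _
      exact iInf_congr fun k => iInf_congr fun _ => QLS.ker_eq_orthComp_range _
    rw [e1, ← QLS.orthComp_biSup, hSsup]
  have hSTv : ∀ x ∈ ctrbSub n m 𝒜 ℬ, QLS.Tv x ∈ ctrbSub n m 𝒜 ℬ := by
    rw [hcS]; exact QLS.tv_cS hDU𝒜 hDUℬ (2*n)
  constructor
  · have hV : ctrbSub n m 𝒜 ℬ ⊓ orthComp (unobsSub n m 𝒜 𝒞)
        = ctrbSub n m 𝒜 ℬ ⊓ Submodule.map Jlin (ctrbSub n m 𝒜 ℬ) := by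
      rw [hunobs, QLS.orthComp_orthComp]
    rw [hV]
    exact QLS.extract _ QLS.jinv_inf
      (fun x hx => ⟨hSTv x hx.1, QLS.tv_mapJ hSTv x hx.2⟩)
  · have hV₂ : orthComp (ctrbSub n m 𝒜 ℬ) ⊓ unobsSub n m 𝒜 𝒞
        = orthComp (ctrbSub n m 𝒜 ℬ)
            ⊓ Submodule.map Jlin (orthComp (ctrbSub n m 𝒜 ℬ)) := by
      rw [hunobs, QLS.orthComp_mapJ]
    rw [hV₂]
    have hTv' := QLS.tv_orthComp hSTv
    exact QLS.extract _ QLS.jinv_inf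
      (fun x hx => ⟨hTv' x hx.1, QLS.tv_mapJ hTv' x hx.2⟩)


end
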